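/- Let T ∈ ℝ^{n×d} with n ≥ d and rank(T) = d, let λ > 0 and T† = (TᵀT)⁻¹Tᵀ. Define f : ℝ^d → ℝ by f(y) := (1/‖T‖²)·min{ λ‖T y − z‖₁ + ½‖z‖₂² : z ∈ ℝ^n, Tᵀ z = 0 }, where ‖T‖ is the spectral norm of T. Then for every x ∈ ℝ^d the point T† S_λ(T x) is the unique minimizer over y ∈ ℝ^d of ½‖x − y‖²_T + f(y), where ‖y‖_T := ‖T y‖₂/‖T‖. -/

import Mathlib

open ContinuousLinearMap
open scoped RealInnerProductSpace

/-- Soft shrinkage on `ℝ`. -/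
noncomputable def softShrink (lam x : ℝ) : ℝ :=
  if x > lam then x - lam else if x < -lam then x + lam else 0

lemma softShrink_key (lam : ℝ) (hlam : 0 ≤ lam) (a t : ℝ) :
    2⁻¹ * (a - softShrink lam a)^2 + lam * |softShrink lam a| + 2⁻¹ * (t - softShrink lam a)^2
      ≤ 2⁻¹ * (a - t)^2 + lam * |t| := by
  unfold softShrink
  rcases abs_cases t with ⟨h1, h2⟩ | ⟨h1, h2⟩ <;> rw [h1] <;> split_ifs with h h'
  · rw [abs_of_nonneg (by linarith)]; nlinarith
  · rw [abs_of_nonpos (by linarith)]; nlinarith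
  · simp only [abs_zero]; push_neg at h h'; nlinarith
  · rw [abs_of_nonneg (by linarith)]; nlinarith
  · rw [abs_of_nonpos (by linarith)]; nlinarith
  · simp only [abs_zero]; push_neg at h h'; nlinarith

lemma eucl_sub_normsq {m : ℕ} (p q : EuclideanSpace ℝ (Fin m)) :
    ‖p - q‖^2 = ∑ i, (p i - q i)^2 := by
  rw [EuclideanSpace.norm_eq, Real.sq_sqrt (by positivity)]
  simp [Real.norm_eq_abs, sq_abs]

lemma pythag {E : Type*} [NormedAddCommGroup E] [InnerProductSpace ℝ E] (p q : E)
    (h : ⟪p, q⟫ = 0) : ‖p + q‖^2 = ‖p‖^2 + ‖q‖^2 := by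
  rw [norm_add_sq_real, h]; ring


set_option maxHeartbeats 1000000 in
/-- Let `T ∈ ℝ^{n×d}` with `n ≥ d` and `rank T = d`, `λ > 0` and
`T† = (TᵀT)⁻¹Tᵀ`. Define `f(y) := (1/‖T‖²)·min{ λ‖Ty − z‖₁ + ½‖z‖₂² : Tᵀz = 0 }` with `‖T‖`
the spectral norm. Then for every `x ∈ ℝ^d` the point `T† S_λ(Tx)` is the unique minimizer
over `y ∈ ℝ^d` of `½‖x − y‖²_T + f(y)`, where `‖y‖_T := ‖Ty‖₂/‖T‖`. -/
theorem frame_soft_shrinkage_is_prox_finiteDim {n d : ℕ} (hd : 0 < d) (hnd : d ≤ n)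
    (T : EuclideanSpace ℝ (Fin d) →L[ℝ] EuclideanSpace ℝ (Fin n))
    (hrank : LinearMap.rank (T : EuclideanSpace ℝ (Fin d) →ₗ[ℝ] EuclideanSpace ℝ (Fin n)) = d)
    (lam : ℝ) (hlam : 0 < lam)
    -- `TᵀT` is invertible with inverse `S`, and `T† = (TᵀT)⁻¹Tᵀ = S ∘ T*`:
    (S : EuclideanSpace ℝ (Fin d) →L[ℝ] EuclideanSpace ℝ (Fin d))
    (hS1 : S ∘L (adjoint T ∘L T) = ContinuousLinearMap.id ℝ (EuclideanSpace ℝ (Fin d)))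
    (hS2 : (adjoint T ∘L T) ∘L S = ContinuousLinearMap.id ℝ (EuclideanSpace ℝ (Fin d)))
    (Td : EuclideanSpace ℝ (Fin n) →L[ℝ] EuclideanSpace ℝ (Fin d))
    (hTd : Td = S ∘L adjoint T)
    -- the function `f`:
    (f : EuclideanSpace ℝ (Fin d) → ℝ)
    (hf : ∀ y : EuclideanSpace ℝ (Fin d), f y = (‖T‖ ^ 2)⁻¹ *
      sInf {v : ℝ | ∃ z : EuclideanSpace ℝ (Fin n), adjoint T z = 0 ∧
        v = lam * (∑ i, |(T y - z) i|) + 2⁻¹ * ‖z‖ ^ 2})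
    -- the objective `F x y = ½‖x − y‖²_T + f(y)`:
    (F : EuclideanSpace ℝ (Fin d) → EuclideanSpace ℝ (Fin d) → ℝ)
    (hF : ∀ x y : EuclideanSpace ℝ (Fin d), F x y = 2⁻¹ * (‖T (x - y)‖ / ‖T‖) ^ 2 + f y) :
    ∀ x : EuclideanSpace ℝ (Fin d),
      (∀ y : EuclideanSpace ℝ (Fin d),
        F x (Td (WithLp.toLp 2 (fun i => softShrink lam (T x i)))) ≤ F x y) ∧
      (∀ y : EuclideanSpace ℝ (Fin d),
        F x y ≤ F x (Td (WithLp.toLp 2 (fun i => softShrink lam (T x i)))) →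
          y = Td (WithLp.toLp 2 (fun i => softShrink lam (T x i)))) := by
  -- injectivity of T from the left-inverse property
  have hTinj : ∀ v : EuclideanSpace ℝ (Fin d), T v = 0 → v = 0 := by
    intro v hv
    have h := DFunLike.congr_fun hS1 v
    simp only [ContinuousLinearMap.comp_apply, ContinuousLinearMap.id_apply] at h
    rw [hv, map_zero, map_zero] at h
    exact h.symm
  -- positivity of ‖T‖
  haveI : Nonempty (Fin d) := ⟨⟨0, hd⟩⟩
  obtain ⟨v, hv⟩ := exists_ne (0 : EuclideanSpace ℝ (Fin d))
  have hTpos : 0 < ‖T‖ := by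
    have h1 : 0 < ‖T v‖ := norm_pos_iff.mpr (fun h => hv (hTinj v h))
    have h2 : ‖T v‖ ≤ ‖T‖ * ‖v‖ := T.le_opNorm v
    have h3 : 0 < ‖v‖ := norm_pos_iff.mpr hv
    nlinarith
  have hT2 : (0:ℝ) < ‖T‖ ^ 2 := by positivity
  have horth : ∀ (w : EuclideanSpace ℝ (Fin d)) (z : EuclideanSpace ℝ (Fin n)),
      adjoint T z = 0 → ⟪T w, z⟫ = 0 := by
    intro w z hz
    rw [← ContinuousLinearMap.adjoint_inner_right, hz, inner_zero_right]
  intro x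
  set ustar : EuclideanSpace ℝ (Fin n) := WithLp.toLp 2 (fun i => softShrink lam (T x i)) with hustar
  set ystar : EuclideanSpace ℝ (Fin d) := Td ustar with hystar
  set zstar : EuclideanSpace ℝ (Fin n) := T ystar - ustar with hzstar
  have hzs : adjoint T zstar = 0 := by
    rw [hzstar, map_sub, hystar, hTd]
    have h := DFunLike.congr_fun hS2 (adjoint T ustar)
    simp only [ContinuousLinearMap.comp_apply, ContinuousLinearMap.id_apply] at h ⊢
    rw [h, sub_self]
  -- the key estimate
  have key : ∀ (y : EuclideanSpace ℝ (Fin d)) (z : EuclideanSpace ℝ (Fin n)),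
      adjoint T z = 0 →
      (2⁻¹ * ‖T x - ustar‖^2 + lam * ∑ i, |ustar i|) + 2⁻¹ * ‖T y - T ystar‖^2
        ≤ 2⁻¹ * ‖T x - T y‖^2 + (lam * (∑ i, |(T y - z) i|) + 2⁻¹ * ‖z‖^2) := by
    intro y z hz
    set u : EuclideanSpace ℝ (Fin n) := T y - z with hu
    have step1 : ‖T x - u‖^2 = ‖T x - T y‖^2 + ‖z‖^2 := by
      have he : T x - u = (T x - T y) + z := by rw [hu]; abel
      rw [he, pythag _ _ (by rw [← map_sub]; exact horth _ _ hz)]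
    have step2 : ‖T y - T ystar‖^2 ≤ ‖u - ustar‖^2 := by
      have he : u - ustar = (T y - T ystar) + (zstar - z) := by rw [hu, hzstar]; abel
      have hz2 : adjoint T (zstar - z) = 0 := by rw [map_sub, hzs, hz, sub_self]
      have ho : ⟪T (y - ystar), zstar - z⟫ = 0 := horth _ _ hz2
      rw [map_sub] at ho
      have h2 : ‖u - ustar‖^2 = ‖T y - T ystar‖^2 + ‖zstar - z‖^2 := by
        rw [he, pythag _ _ ho]
      linarith [sq_nonneg ‖zstar - z‖]
    have step3 : 2⁻¹ * ‖T x - ustar‖^2 + lam * ∑ i, |ustar i| + 2⁻¹ * ‖u - ustar‖^2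
        ≤ 2⁻¹ * ‖T x - u‖^2 + lam * ∑ i, |u i| := by
      rw [eucl_sub_normsq, eucl_sub_normsq, eucl_sub_normsq, Finset.mul_sum, Finset.mul_sum,
        Finset.mul_sum, Finset.mul_sum, Finset.mul_sum,
        ← Finset.sum_add_distrib, ← Finset.sum_add_distrib, ← Finset.sum_add_distrib]
      apply Finset.sum_le_sum
      intro i _
      have hs : ustar i = softShrink lam (T x i) := rfl
      have hk := softShrink_key lam hlam.le (T x i) (u i)
      rw [hs]
      linarith
    linarith
  -- lower bound for elements of the sInf set
  have hlb : ∀ y : EuclideanSpace ℝ (Fin d), ∀ w ∈ {v : ℝ | ∃ z : EuclideanSpace ℝ (Fin n),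
      adjoint T z = 0 ∧ v = lam * (∑ i, |(T y - z) i|) + 2⁻¹ * ‖z‖ ^ 2},
      (2⁻¹ * ‖T x - ustar‖^2 + lam * ∑ i, |ustar i|) + 2⁻¹ * ‖T y - T ystar‖^2
        - 2⁻¹ * ‖T x - T y‖^2 ≤ w := by
    rintro y w ⟨z, hz, rfl⟩
    linarith [key y z hz]
  have hne : ∀ y : EuclideanSpace ℝ (Fin d), Set.Nonempty {v : ℝ |
      ∃ z : EuclideanSpace ℝ (Fin n), adjoint T z = 0 ∧
        v = lam * (∑ i, |(T y - z) i|) + 2⁻¹ * ‖z‖ ^ 2} :=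
    fun y => ⟨_, 0, map_zero _, rfl⟩
  have hΦlb : ∀ y : EuclideanSpace ℝ (Fin d),
      (2⁻¹ * ‖T x - ustar‖^2 + lam * ∑ i, |ustar i|) + 2⁻¹ * ‖T y - T ystar‖^2
        ≤ 2⁻¹ * ‖T x - T y‖^2 + sInf {v : ℝ | ∃ z : EuclideanSpace ℝ (Fin n),
          adjoint T z = 0 ∧ v = lam * (∑ i, |(T y - z) i|) + 2⁻¹ * ‖z‖ ^ 2} := by
    intro y
    have := le_csInf (hne y) (hlb y)
    linarith
  have hupper : 2⁻¹ * ‖T x - T ystar‖^2 + sInf {v : ℝ | ∃ z : EuclideanSpace ℝ (Fin n),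
      adjoint T z = 0 ∧ v = lam * (∑ i, |(T ystar - z) i|) + 2⁻¹ * ‖z‖ ^ 2}
      ≤ 2⁻¹ * ‖T x - ustar‖^2 + lam * ∑ i, |ustar i| := by
    have hmem : lam * (∑ i, |(T ystar - zstar) i|) + 2⁻¹ * ‖zstar‖ ^ 2 ∈
        {v : ℝ | ∃ z : EuclideanSpace ℝ (Fin n), adjoint T z = 0 ∧
          v = lam * (∑ i, |(T ystar - z) i|) + 2⁻¹ * ‖z‖ ^ 2} := ⟨zstar, hzs, rfl⟩
    have h1 := csInf_le ⟨_, hlb ystar⟩ hmem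
    have h2 : T ystar - zstar = ustar := by rw [hzstar]; abel
    have h3 : ‖T x - ustar‖^2 = ‖T x - T ystar‖^2 + ‖zstar‖^2 := by
      have he : T x - ustar = (T x - T ystar) + zstar := by rw [hzstar]; abel
      rw [he, pythag _ _ (by rw [← map_sub]; exact horth _ _ hzs)]
    rw [h2] at h1
    linarith
  -- rewrite F
  have hFeq : ∀ y : EuclideanSpace ℝ (Fin d), F x y = (‖T‖ ^ 2)⁻¹ *
      (2⁻¹ * ‖T x - T y‖^2 + sInf {v : ℝ | ∃ z : EuclideanSpace ℝ (Fin n),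
        adjoint T z = 0 ∧ v = lam * (∑ i, |(T y - z) i|) + 2⁻¹ * ‖z‖ ^ 2}) := by
    intro y
    rw [hF, hf, map_sub, div_pow]
    rw [div_eq_mul_inv]
    ring
  refine ⟨fun y => ?_, fun y hy => ?_⟩
  · rw [hFeq, hFeq]
    apply mul_le_mul_of_nonneg_left _ (inv_nonneg.mpr hT2.le)
    have h1 := hΦlb y
    have h2 := hupper
    have h3 := sq_nonneg ‖T y - T ystar‖
    linarith
  · rw [hFeq, hFeq] at hy
    have hy' := (mul_le_mul_iff_right₀ (inv_pos.mpr hT2)).mp hy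
    have h1 := hΦlb y
    have h2 := hupper
    have h3 : ‖T y - T ystar‖^2 ≤ 0 := by linarith
    have h4 : T y - T ystar = 0 :=
      norm_eq_zero.mp (le_antisymm (by nlinarith [sq_nonneg ‖T y - T ystar‖, norm_nonneg (T y - T ystar)]) (norm_nonneg _))
    have h5 : y - ystar = 0 := hTinj _ (by rw [map_sub]; exact h4)
    exact sub_eq_zero.mp h5
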